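/- Define V(r) = 1/sinh²(r) − 1/r² for r > 0. Then V'(r) ≠ 0 for all r > 0, i.e., V attains no critical point on (0, ∞). -/

import Mathlib

open Real

private lemma pos_aux (f f' : ℝ → ℝ) (hf : ∀ x, HasDerivAt f (f' x) x)
    (h0 : f 0 = 0) (hpos : ∀ x > 0, 0 < f' x) {x : ℝ} (hx : 0 < x) : 0 < f x := by
  have hmono : StrictMonoOn f (Set.Ici 0) := by
    apply strictMonoOn_of_deriv_pos (convex_Ici 0)
    · exact fun y _ => (hf y).continuousAt.continuousWithinAt
    · intro y hy
      rw [interior_Ici, Set.mem_Ioi] at hy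
      rw [(hf y).deriv]
      exact hpos y hy
  have := hmono (Set.mem_Ici.mpr le_rfl) (Set.mem_Ici.mpr hx.le) hx
  rwa [h0] at this

private lemma cosh_gt (x : ℝ) (hx : 0 < x) : 1 + x ^ 2 / 2 < Real.cosh x := by
  have h := pos_aux (fun y => Real.cosh y - 1 - y ^ 2 / 2) (fun y => Real.sinh y - y)
    (fun y => by
      have h1 : HasDerivAt (fun y : ℝ => Real.cosh y - 1 - y ^ 2 / 2)
          (Real.sinh y - 0 - 2 * y / 2) y :=
        ((Real.hasDerivAt_cosh y).sub (hasDerivAt_const y 1)).sub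
          (by simpa using (hasDerivAt_pow 2 y).div_const 2)
      convert h1 using 1
      ring )
    (by simp) (fun y hy => by
      have := Real.self_lt_sinh_iff.mpr hy
      show 0 < Real.sinh y - y
      linarith) hx
  linarith

private lemma sinh_gt (x : ℝ) (hx : 0 < x) : x + x ^ 3 / 6 < Real.sinh x := by
  have h := pos_aux (fun y => Real.sinh y - y - y ^ 3 / 6) (fun y => Real.cosh y - 1 - y ^ 2 / 2)
    (fun y => by
      have h1 : HasDerivAt (fun y : ℝ => Real.sinh y - y - y ^ 3 / 6)
          (Real.cosh y - 1 - 3 * y ^ 2 / 6) y :=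
        ((Real.hasDerivAt_sinh y).sub (hasDerivAt_id y)).sub
          (by simpa using (hasDerivAt_pow 3 y).div_const 6)
      convert h1 using 1
      ring )
    (by simp) (fun y hy => by
      show 0 < Real.cosh y - 1 - y ^ 2 / 2
      linarith [cosh_gt y hy]) hx
  linarith

private lemma sinh_lt_mul (x : ℝ) (hx : 0 < x) : Real.sinh x < x * Real.cosh x := by
  have h := pos_aux (fun y => y * Real.cosh y - Real.sinh y) (fun y => y * Real.sinh y)
    (fun y => by
      have h1 : HasDerivAt (fun y : ℝ => y * Real.cosh y - Real.sinh y)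
          (1 * Real.cosh y + y * Real.sinh y - Real.cosh y) y :=
        ((hasDerivAt_id y).mul (Real.hasDerivAt_cosh y)).sub (Real.hasDerivAt_sinh y)
      convert h1 using 1
      ring )
    (by simp) (fun y hy => by
      show 0 < y * Real.sinh y
      exact mul_pos hy (Real.sinh_pos_iff.mpr hy)) hx
  linarith

private lemma key (x : ℝ) (hx : 0 < x) : x ^ 3 * Real.cosh x < Real.sinh x ^ 3 := by
  have h := pos_aux (fun y => Real.sinh y ^ 3 - y ^ 3 * Real.cosh y)
    (fun y => 3 * Real.sinh y ^ 2 * Real.cosh y - (3 * y ^ 2 * Real.cosh y + y ^ 3 * Real.sinh y))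
    (fun y => by
      have h1 : HasDerivAt (fun s : ℝ => Real.sinh s ^ 3)
          (3 * Real.sinh y ^ 2 * Real.cosh y) y := by
        have h := (Real.hasDerivAt_sinh y).pow 3
        have e : (3:ℝ) * Real.sinh y ^ 2 * Real.cosh y
            = (3:ℕ) * Real.sinh y ^ (3 - 1) * Real.cosh y := by push_cast; ring
        rw [e]; exact h
      have h2 : HasDerivAt (fun s : ℝ => s ^ 3 * Real.cosh s)
          (3 * y ^ 2 * Real.cosh y + y ^ 3 * Real.sinh y) y := by
        have h := (hasDerivAt_pow 3 y).mul (Real.hasDerivAt_cosh y)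
        have e : (3:ℝ) * y ^ 2 * Real.cosh y + y ^ 3 * Real.sinh y
            = (3:ℕ) * y ^ (3 - 1) * Real.cosh y + y ^ 3 * Real.sinh y := by push_cast; ring
        rw [e]; exact h
      exact h1.sub h2 )
    (by simp) (fun y hy => by
      show 0 < 3 * Real.sinh y ^ 2 * Real.cosh y
          - (3 * y ^ 2 * Real.cosh y + y ^ 3 * Real.sinh y)
      have hc : 0 < Real.cosh y := Real.cosh_pos y
      have hs := sinh_gt y hy
      have hm := sinh_lt_mul y hy
      have hsp : 0 < Real.sinh y := Real.sinh_pos_iff.mpr hy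
      have hsq : y ^ 2 + y ^ 4 / 3 < Real.sinh y ^ 2 := by
        nlinarith [pow_pos hy 3, pow_pos hy 6]
      have h5 : y ^ 4 * Real.cosh y < 3 * Real.cosh y * (Real.sinh y ^ 2 - y ^ 2) := by
        nlinarith [pow_pos hy 4]
      have h6 : y ^ 3 * Real.sinh y < y ^ 4 * Real.cosh y := by
        nlinarith [pow_pos hy 3]
      nlinarith ) hx
  linarith

/-- Define `V(r) = 1/sinh² r − 1/r²` for `r > 0`.  Then `V'(r) ≠ 0` for all
`r > 0`, i.e. `V` attains no critical point on `(0, ∞)`. -/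
theorem stmt4 (r : ℝ) (hr : 0 < r) (d : ℝ)
    (hd : HasDerivAt (fun s : ℝ => 1 / Real.sinh s ^ 2 - 1 / s ^ 2) d r) :
    d ≠ 0 := by
  have hs : 0 < Real.sinh r := Real.sinh_pos_iff.mpr hr
  have hs2 : Real.sinh r ^ 2 ≠ 0 := by positivity
  have hr2 : r ^ 2 ≠ 0 := by positivity
  have h1 : HasDerivAt (fun s : ℝ => 1 / Real.sinh s ^ 2)
      (-(2 * Real.sinh r * Real.cosh r) / (Real.sinh r ^ 2) ^ 2) r := by
    have hp : HasDerivAt (fun s : ℝ => Real.sinh s ^ 2) (2 * Real.sinh r * Real.cosh r) r := by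
      have h := (Real.hasDerivAt_sinh r).pow 2
      have e : (2:ℝ) * Real.sinh r * Real.cosh r
          = (2:ℕ) * Real.sinh r ^ (2 - 1) * Real.cosh r := by push_cast; ring
      rw [e]; exact h
    have := hp.inv hs2
    simpa [one_div, Pi.inv_def] using this
  have h2 : HasDerivAt (fun s : ℝ => 1 / s ^ 2) (-(2 * r) / (r ^ 2) ^ 2) r := by
    have hp : HasDerivAt (fun s : ℝ => s ^ 2) (2 * r) r := by
      have h := hasDerivAt_pow 2 r
      have e : (2:ℝ) * r = (2:ℕ) * r ^ (2 - 1) := by push_cast; ring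
      rw [e]; exact h
    have := hp.inv hr2
    simpa [one_div, Pi.inv_def] using this
  have hd' := h1.sub h2
  have hde : d = -(2 * Real.sinh r * Real.cosh r) / (Real.sinh r ^ 2) ^ 2
      - -(2 * r) / (r ^ 2) ^ 2 := hd.unique hd'
  have hkey := key r hr
  intro h0
  rw [h0] at hde
  have hc : 0 < Real.cosh r := Real.cosh_pos r
  field_simp at hde
  nlinarith [mul_pos hr hs, mul_lt_mul_of_pos_left hkey (mul_pos hr hs)]
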